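/- Let T be a Noetherian regular ring of prime characteristic p, let e ≥ 1, assume T^{1/p^e} is a ∩-flat T-module, and let A, B ⊆ T be ideals. Then Ã^(e) + B is the smallest ideal J of T such that B ⊆ J and A ⊆ J^{[p^e]}. -/

import Mathlib

open IsLocalRing

/-- The `q`-th Frobenius power of an ideal: the ideal generated by `q`-th powers of elements. -/
def Ideal.frobPow {R : Type*} [CommSemiring R] (q : ℕ) (I : Ideal R) : Ideal R :=
  Ideal.span ((fun a => a ^ q) '' (I : Set R))

/-- Regularity for a local ring: the maximal ideal is generated by `dim R` elements. -/
def IsRegularLocal (R : Type*) [CommRing R] [IsLocalRing R] : Prop :=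
  ∃ (n : ℕ) (x : Fin n → R), maximalIdeal R = Ideal.span (Set.range x) ∧
    ringKrullDim R = n

/-- A regular (commutative Noetherian) ring: every localization at a prime is regular local. -/
def IsRegularRing' (T : Type*) [CommRing T] : Prop :=
  ∀ (P : Ideal T) [P.IsPrime], IsRegularLocal (Localization.AtPrime P)

/-- `T^{1/p^e}`: the ring `T` viewed as a module over itself by restriction of scalars
along the `e`-th iterate of the Frobenius endomorphism (`t • x = t^{p^e} * x`). -/
def FrobTwist (T : Type*) (p e : ℕ) : Type _ := T

instance FrobTwist.instAddCommGroup {T : Type*} [CommRing T] {p e : ℕ} :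
    AddCommGroup (FrobTwist T p e) :=
  inferInstanceAs (AddCommGroup T)

instance FrobTwist.instModule {T : Type*} [CommRing T] {p e : ℕ} [ExpChar T p] :
    Module T (FrobTwist T p e) :=
  Module.compHom T (iterateFrobenius T p e)

/-- A `∩`-flat module: flat, and tensoring commutes with arbitrary intersections of
submodules of finitely generated modules. -/
def IsInterFlat (T : Type u) [CommRing T] (M : Type v) [AddCommGroup M] [Module T M] : Prop :=
  Module.Flat T M ∧
    ∀ (N : Type u) [AddCommGroup N] [Module T N], Module.Finite T N →
      ∀ 𝒮 : Set (Submodule T N),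
        LinearMap.range (LinearMap.lTensor M (sInf 𝒮).subtype) =
          ⨅ P ∈ 𝒮, LinearMap.range (LinearMap.lTensor M (Submodule.subtype P))

def Ideal.tilde {T : Type*} [CommSemiring T] (q : ℕ) (A : Ideal T) : Ideal T :=
  sInf { L : Ideal T | A ≤ Ideal.frobPow q L }

/-- `Ã^{(e)}`: the intersection of all ideals `L` with `A ⊆ L^{[q]}` (`q = p^e`). -/
def FrobTwist.of {T : Type*} (p e : ℕ) (x : T) : FrobTwist T p e := x

lemma FrobTwist.of_add {T : Type*} [CommRing T] (p e : ℕ) (x y : T) :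
    FrobTwist.of p e (x + y) = FrobTwist.of p e x + FrobTwist.of p e y := rfl

lemma ft_smul {T : Type*} [CommRing T] {p e : ℕ} [ExpChar T p] (r x : T) :
    r • FrobTwist.of p e x = FrobTwist.of p e (r ^ p ^ e * x) := by
  show iterateFrobenius T p e r * x = _
  rw [iterateFrobenius_def]
  rfl

def FrobTwist.toT {T : Type*} {p e : ℕ} (x : FrobTwist T p e) : T := x

lemma FrobTwist.of_toT {T : Type*} {p e : ℕ} (x : FrobTwist T p e) :
    FrobTwist.of p e (FrobTwist.toT x) = x := rfl

lemma toT_smul {T : Type*} [CommRing T] {p e : ℕ} [ExpChar T p] (r : T)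
    (x : FrobTwist T p e) :
    FrobTwist.toT (r • x) = r ^ p ^ e * FrobTwist.toT x := by
  show iterateFrobenius T p e r * FrobTwist.toT x = _
  rw [iterateFrobenius_def]

lemma smul_of_mem {T : Type*} [CommRing T] {p e : ℕ} [ExpChar T p] (I : Ideal T)
    {r : T} (hr : r ∈ I) (x : T) :
    FrobTwist.of p e (r ^ p ^ e * x) ∈ I • (⊤ : Submodule T (FrobTwist T p e)) := by
  have h := Submodule.smul_mem_smul (N := (⊤ : Submodule T (FrobTwist T p e))) hr
    (Submodule.mem_top (x := FrobTwist.of p e x))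
  rwa [ft_smul] at h

lemma mem_smul_top_iff {T : Type*} [CommRing T] {p e : ℕ} [ExpChar T p]
    (I : Ideal T) (x : T) :
    FrobTwist.of p e x ∈ I • (⊤ : Submodule T (FrobTwist T p e)) ↔
      x ∈ Ideal.frobPow (p ^ e) I := by
  have key : ∀ y : FrobTwist T p e, y ∈ I • (⊤ : Submodule T (FrobTwist T p e)) →
      ∀ t : T, FrobTwist.of p e (t * FrobTwist.toT y) ∈
        I • (⊤ : Submodule T (FrobTwist T p e)) := by
    intro y hy
    refine Submodule.smul_induction_on
      (p := fun y => ∀ t : T, FrobTwist.of p e (t * FrobTwist.toT y) ∈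
        I • (⊤ : Submodule T (FrobTwist T p e)))
      hy ?_ ?_
    · intro r hr n _ t
      rw [toT_smul]
      have h1 : t * (r ^ p ^ e * FrobTwist.toT n) = r ^ p ^ e * (t * FrobTwist.toT n) := by ring
      rw [h1]
      exact smul_of_mem I hr _
    · intro a b ha hb t
      have h1 : FrobTwist.of p e (t * FrobTwist.toT (a + b)) =
          FrobTwist.of p e (t * FrobTwist.toT a) + FrobTwist.of p e (t * FrobTwist.toT b) := by
        rw [← FrobTwist.of_add]
        show FrobTwist.of p e (t * (FrobTwist.toT a + FrobTwist.toT b)) = _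
        congr 1
        ring
      rw [h1]
      exact add_mem (ha t) (hb t)
  constructor
  · intro hx
    refine Submodule.smul_induction_on
      (p := fun y => FrobTwist.toT y ∈ Ideal.frobPow (p ^ e) I) hx ?_ ?_
    · intro r hr n _
      rw [toT_smul]
      exact Ideal.mul_mem_right _ _ (Ideal.subset_span ⟨r, hr, rfl⟩)
    · intro a b ha hb
      exact add_mem ha hb
  · intro hx
    refine Submodule.span_induction (p := fun y _ =>
      FrobTwist.of p e y ∈ I • (⊤ : Submodule T (FrobTwist T p e))) ?_ ?_ ?_ ?_ hx
    · rintro _ ⟨a, ha, rfl⟩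
      show FrobTwist.of p e (a ^ p ^ e) ∈ I • (⊤ : Submodule T (FrobTwist T p e))
      have h1 : (a : T) ^ p ^ e = a ^ p ^ e * 1 := by ring
      rw [h1]
      exact smul_of_mem I ha 1
    · exact Submodule.zero_mem _
    · intro a b _ _ ha hb
      exact add_mem ha hb
    · intro t y _ hy
      exact key _ hy t

lemma map_range_lTensor {T : Type*} [CommRing T] {p e : ℕ} [ExpChar T p] (I : Ideal T) :
    Submodule.map ((TensorProduct.rid T (FrobTwist T p e)) : _ →ₗ[T] _)
      (LinearMap.range (LinearMap.lTensor (FrobTwist T p e) (Submodule.subtype I))) =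
      I • (⊤ : Submodule T (FrobTwist T p e)) := by
  apply le_antisymm
  · rintro z ⟨y, ⟨x, rfl⟩, rfl⟩
    induction x using TensorProduct.induction_on with
    | zero => simp
    | tmul m i =>
        rw [LinearMap.lTensor_tmul]
        simp only [Submodule.coe_subtype, LinearEquiv.coe_coe, TensorProduct.rid_tmul]
        exact Submodule.smul_mem_smul i.2 Submodule.mem_top
    | add x y hx hy =>
        rw [map_add, map_add]
        exact add_mem hx hy
  · intro z hz
    refine Submodule.smul_induction_on hz ?_ ?_
    · intro r hr n _
      refine ⟨LinearMap.lTensor (FrobTwist T p e) (Submodule.subtype I) (n ⊗ₜ ⟨r, hr⟩),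
        ⟨_, rfl⟩, ?_⟩
      simp [TensorProduct.rid_tmul]
    · intro a b ha hb
      exact add_mem ha hb

lemma frobPow_sInf {T : Type u} [CommRing T] {p e : ℕ} [ExpChar T p]
    (hflat : IsInterFlat T (FrobTwist T p e)) (𝒮 : Set (Ideal T)) :
    Ideal.frobPow (p ^ e) (sInf 𝒮) = ⨅ L ∈ 𝒮, Ideal.frobPow (p ^ e) L := by
  have key := hflat.2 T inferInstance 𝒮
  ext x
  have h1 : ∀ I : Ideal T, x ∈ Ideal.frobPow (p ^ e) I ↔
      (TensorProduct.rid T (FrobTwist T p e)).symm (FrobTwist.of p e x) ∈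
        LinearMap.range (LinearMap.lTensor (FrobTwist T p e) (Submodule.subtype I)) := by
    intro I
    rw [← mem_smul_top_iff, ← map_range_lTensor (I := I), Submodule.mem_map_equiv]
  rw [h1, key]
  simp only [Submodule.mem_iInf]
  exact forall₂_congr fun L hL => (h1 L).symm

lemma Ideal.frobPow_mono' {R : Type*} [CommSemiring R] (q : ℕ) {I J : Ideal R} (h : I ≤ J) :
    Ideal.frobPow q I ≤ Ideal.frobPow q J :=
  Ideal.span_mono (Set.image_mono h)

/-- Let `T` be a Noetherian regular ring of prime characteristic `p`,
`e ≥ 1`, with `T^{1/p^e}` a `∩`-flat `T`-module, and let `A, B ⊆ T` be ideals.  Then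
`Ã^{(e)} + B` is the smallest ideal `J` of `T` such that `B ⊆ J` and `A ⊆ J^{[p^e]}`. -/
theorem stmt9 {T : Type u} [CommRing T] [IsNoetherianRing T]
    (p : ℕ) [Fact p.Prime] [CharP T p] (hreg : IsRegularRing' T)
    (e : ℕ) (he : 1 ≤ e) (hflat : IsInterFlat T (FrobTwist T p e))
    (A B : Ideal T) :
    IsLeast { J : Ideal T | B ≤ J ∧ A ≤ Ideal.frobPow (p ^ e) J }
      (Ideal.tilde (p ^ e) A + B) := by
  have hA : A ≤ Ideal.frobPow (p ^ e) (Ideal.tilde (p ^ e) A) := by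
    rw [Ideal.tilde, frobPow_sInf hflat]
    exact le_iInf₂ fun L hL => hL
  constructor
  · refine ⟨?_, hA.trans (Ideal.frobPow_mono' _ ?_)⟩
    · rw [Submodule.add_eq_sup]
      exact le_sup_right
    · rw [Submodule.add_eq_sup]
      exact le_sup_left
  · rintro J ⟨hB, hAJ⟩
    rw [Submodule.add_eq_sup]
    exact sup_le (sInf_le hAJ) hB
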